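/- Let U₁ = diag(η₂,η₁,η₃) and U₂ = diag(η₁,η₂,η₃) with η₁,η₂,η₃ > 0 and η₁ ≠ η₂, let K = SO(3)U₁ ∪ SO(3)U₂, and let R(α) be rotation by angle α about e₃. Then K R(α) = K if and only if α = rπ/2 for some integer r. -/
import Mathlib


open Matrix

/-- The rotation group SO(3) as a set of 3×3 real matrices. -/
def SO3 : Set (Matrix (Fin 3) (Fin 3) ℝ) := {R | R * Rᵀ = 1 ∧ R.det = 1}

/-- Rotation by angle α about the axis e₃. -/
noncomputable def Rot (α : ℝ) : Matrix (Fin 3) (Fin 3) ℝ :=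
  !![Real.cos α, -Real.sin α, 0; Real.sin α, Real.cos α, 0; 0, 0, 1]

lemma diag3 (a b c : ℝ) : Matrix.diagonal ![a,b,c] = !![a,0,0;0,b,0;0,0,c] := by
  ext i j
  fin_cases i <;> fin_cases j <;>
    simp [Matrix.diagonal_apply, Matrix.vecHead, Matrix.vecTail]

lemma Rot_mem_SO3 (α : ℝ) : Rot α ∈ SO3 := by
  constructor
  · ext i j
    fin_cases i <;> fin_cases j <;>
      simp [Rot, Matrix.mul_apply, Fin.sum_univ_three, Matrix.one_apply,
        Matrix.transpose_apply, Matrix.vecHead, Matrix.vecTail] <;>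
      nlinarith [Real.sin_sq_add_cos_sq α]
  · simp [Rot, Matrix.det_fin_three]
    nlinarith [Real.sin_sq_add_cos_sq α]

lemma SO3_mul {A B : Matrix (Fin 3) (Fin 3) ℝ} (hA : A ∈ SO3) (hB : B ∈ SO3) :
    A * B ∈ SO3 := by
  obtain ⟨hA1, hA2⟩ := hA
  obtain ⟨hB1, hB2⟩ := hB
  constructor
  · rw [Matrix.transpose_mul, Matrix.mul_assoc, ← Matrix.mul_assoc B, hB1, Matrix.one_mul, hA1]
  · rw [Matrix.det_mul, hA2, hB2, one_mul]

lemma SO3_transpose {A : Matrix (Fin 3) (Fin 3) ℝ} (hA : A ∈ SO3) : Aᵀ ∈ SO3 := by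
  obtain ⟨hA1, hA2⟩ := hA
  constructor
  · rw [Matrix.transpose_transpose, mul_eq_one_comm.mp hA1]
  · rw [Matrix.det_transpose, hA2]

lemma image_well (R Q U V : Matrix (Fin 3) (Fin 3) ℝ) (hQ : Q ∈ SO3)
    (h : U * R = Q * V) :
    (fun A => A * R) '' ((fun S => S * U) '' SO3) = (fun S => S * V) '' SO3 := by
  have hQQ : Qᵀ * Q = 1 := mul_eq_one_comm.mp hQ.1
  ext A
  simp only [Set.mem_image]
  constructor
  · rintro ⟨_, ⟨S, hS, rfl⟩, rfl⟩
    exact ⟨S * Q, SO3_mul hS hQ, by rw [Matrix.mul_assoc, ← h, Matrix.mul_assoc]⟩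
  · rintro ⟨S, hS, rfl⟩
    refine ⟨(S * Qᵀ) * U, ⟨S * Qᵀ, SO3_mul hS (SO3_transpose hQ), rfl⟩, ?_⟩
    rw [Matrix.mul_assoc, h, Matrix.mul_assoc, ← Matrix.mul_assoc Qᵀ, hQQ,
      Matrix.one_mul]

/-- For the two orthorhombic wells K = SO(3)U₁ ∪ SO(3)U₂, K R(α) = K if and only if
α is an integer multiple of π/2. -/
theorem wells_rotation_invariance (α : ℝ) (η₁ η₂ η₃ : ℝ)
    (h₁ : 0 < η₁) (h₂ : 0 < η₂) (h₃ : 0 < η₃) (hne : η₁ ≠ η₂) :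
    ((fun A => A * Rot α) ''
        (((fun R => R * Matrix.diagonal ![η₂, η₁, η₃]) '' SO3) ∪
         ((fun R => R * Matrix.diagonal ![η₁, η₂, η₃]) '' SO3))
      = ((fun R => R * Matrix.diagonal ![η₂, η₁, η₃]) '' SO3) ∪
        ((fun R => R * Matrix.diagonal ![η₁, η₂, η₃]) '' SO3))
    ↔ ∃ r : ℤ, α = r * (Real.pi / 2) := by
  set U₁ := Matrix.diagonal ![η₂, η₁, η₃] with hU₁
  set U₂ := Matrix.diagonal ![η₁, η₂, η₃] with hU₂
  have hone : (1 : Matrix (Fin 3) (Fin 3) ℝ) ∈ SO3 := by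
    constructor <;> simp
  have hne2 : η₁ * η₁ - η₂ * η₂ ≠ 0 := by
    intro hz
    apply hne
    nlinarith
  constructor
  · intro h
    have hU1K : U₁ * Rot α ∈
        (((fun R => R * U₁) '' SO3) ∪ ((fun R => R * U₂) '' SO3)) := by
      rw [← h]
      exact Set.mem_image_of_mem _ (Or.inl ⟨1, hone, one_mul U₁⟩)
    have hsc : Real.sin α * Real.cos α = 0 := by
      rcases hU1K with ⟨S, hS, heq⟩ | ⟨S, hS, heq⟩
      · simp only at heq
        have hSo : Sᵀ * S = 1 := mul_eq_one_comm.mp hS.1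
        have hmat : (U₁ * Rot α)ᵀ * (U₁ * Rot α) = U₁ᵀ * U₁ := by
          rw [← heq, Matrix.transpose_mul, Matrix.mul_assoc, ← Matrix.mul_assoc Sᵀ,
            hSo, Matrix.one_mul]
        have h2 := congrFun (congrFun hmat 0) 1
        simp [hU₁, diag3, Rot, Matrix.mul_apply, Matrix.transpose_apply,
          Fin.sum_univ_three, Matrix.vecHead, Matrix.vecTail] at h2
        have h4 : (η₁ * η₁ - η₂ * η₂) * (Real.sin α * Real.cos α) = 0 := by
          linear_combination h2
        exact (mul_eq_zero.mp h4).resolve_left hne2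
      · simp only at heq
        have hSo : Sᵀ * S = 1 := mul_eq_one_comm.mp hS.1
        have hmat : (U₁ * Rot α)ᵀ * (U₁ * Rot α) = U₂ᵀ * U₂ := by
          rw [← heq, Matrix.transpose_mul, Matrix.mul_assoc, ← Matrix.mul_assoc Sᵀ,
            hSo, Matrix.one_mul]
        have h2 := congrFun (congrFun hmat 0) 1
        simp [hU₁, hU₂, diag3, Rot, Matrix.mul_apply, Matrix.transpose_apply,
          Fin.sum_univ_three, Matrix.vecHead, Matrix.vecTail] at h2
        have h4 : (η₁ * η₁ - η₂ * η₂) * (Real.sin α * Real.cos α) = 0 := by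
          linear_combination h2
        exact (mul_eq_zero.mp h4).resolve_left hne2
    have h2α : Real.sin (2 * α) = 0 := by
      rw [Real.sin_two_mul]
      linarith [hsc]
    obtain ⟨n, hn⟩ := Real.sin_eq_zero_iff.mp h2α
    exact ⟨n, by linarith⟩
  · rintro ⟨r, rfl⟩
    rw [Set.image_union]
    rcases Int.even_or_odd r with ⟨m, hm⟩ | ⟨m, hm⟩
    · have hs : Real.sin ((r : ℝ) * (Real.pi / 2)) = 0 := by
        have : (r : ℝ) * (Real.pi / 2) = (m : ℝ) * Real.pi := by
          rw [hm]; push_cast; ring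
        rw [this, Real.sin_int_mul_pi]
      have comm : ∀ x y z : ℝ,
          Matrix.diagonal ![x, y, z] * Rot ((r : ℝ) * (Real.pi / 2))
            = Rot ((r : ℝ) * (Real.pi / 2)) * Matrix.diagonal ![x, y, z] := by
        intro x y z
        rw [diag3]
        ext i j
        fin_cases i <;> fin_cases j <;>
          simp [Rot, Matrix.mul_apply, Fin.sum_univ_three, Matrix.vecHead,
            Matrix.vecTail, hs] <;> ring
      rw [image_well _ _ U₁ U₁ (Rot_mem_SO3 _) (by rw [hU₁]; exact comm η₂ η₁ η₃),
        image_well _ _ U₂ U₂ (Rot_mem_SO3 _) (by rw [hU₂]; exact comm η₁ η₂ η₃)]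
    · have hc : Real.cos ((r : ℝ) * (Real.pi / 2)) = 0 := by
        have : (r : ℝ) * (Real.pi / 2) = (m : ℝ) * Real.pi + Real.pi / 2 := by
          rw [hm]; push_cast; ring
        rw [this, Real.cos_add, Real.cos_pi_div_two, Real.sin_int_mul_pi]
        ring
      have swap : ∀ x y : ℝ,
          Matrix.diagonal ![x, y, η₃] * Rot ((r : ℝ) * (Real.pi / 2))
            = Rot ((r : ℝ) * (Real.pi / 2)) * Matrix.diagonal ![y, x, η₃] := by
        intro x y
        rw [diag3, diag3]
        ext i j
        fin_cases i <;> fin_cases j <;>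
          simp [Rot, Matrix.mul_apply, Fin.sum_univ_three, Matrix.vecHead,
            Matrix.vecTail, hc] <;> ring
      rw [image_well _ _ U₁ U₂ (Rot_mem_SO3 _) (by rw [hU₁, hU₂]; exact swap η₂ η₁),
        image_well _ _ U₂ U₁ (Rot_mem_SO3 _) (by rw [hU₁, hU₂]; exact swap η₁ η₂),
        Set.union_comm]
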